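/- Let k ≥ 1 and j ≥ 1 be integers, ε > 0, d ≥ 2 a real, q ≥ 2 an integer, and h an integer with 0 ≤ h ≤ k − 1. Let δ be a real with 0 < δ ≤ 1 and δ/q ≥ d^{1−k}, let w̃ be a real with 0 ≤ w̃ ≤ ε·2^{−j+1}, and let x_1,…,x_q, y_1,…,y_q be nonnegative reals with Σ_{i=1}^q x_i ≤ 1 and Σ_{i=1}^q y_i ≤ 1. Then the increase of the potential caused by attaching the q new leaves satisfies 2·Σ_{i=1}^q w̃·( 4k·y_i·log((1 + δ/q)/(x_i + δ/q)) + (2k − h − 1)·x_i ) ≤ ε·2^{−j+2}·(2k + 4k²·log d). -/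
import Mathlib


open Finset Real

/-- Fork-step bound, Lemma 6 of the paper: attaching `q ≥ 2` new leaves
(with revised weight `w̃ ≤ ε·2^{1−j}` and shift parameter `δ/q ≥ d^{1−k}`) to a leaf of
combinatorial depth `h ≤ k−1` increases the potential by at most
`ε·2^{2−j}·(2k + 4k²·log d)`. -/
theorem stmt4
    (k j : ℕ) (hk : 1 ≤ k) (hj : 1 ≤ j)
    (ε : ℝ) (hε : 0 < ε)
    (d : ℝ) (hd : 2 ≤ d)
    (q : ℕ) (hq : 2 ≤ q)
    (h : ℕ) (hh : h + 1 ≤ k)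
    (δ : ℝ) (hδ0 : 0 < δ) (hδ1 : δ ≤ 1)
    (hδq : d ^ (1 - (k : ℤ)) ≤ δ / q)
    (wt : ℝ) (hwt0 : 0 ≤ wt) (hwt1 : wt ≤ ε * 2 ^ (1 - (j : ℤ)))
    (x y : Fin q → ℝ)
    (hx0 : ∀ i, 0 ≤ x i) (hy0 : ∀ i, 0 ≤ y i)
    (hx1 : ∑ i, x i ≤ 1) (hy1 : ∑ i, y i ≤ 1) :
    2 * ∑ i, wt * (4 * (k : ℝ) * y i * Real.log ((1 + δ / q) / (x i + δ / q))
          + (2 * (k : ℝ) - (h : ℝ) - 1) * x i)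
      ≤ ε * 2 ^ (2 - (j : ℤ)) * (2 * (k : ℝ) + 4 * (k : ℝ) ^ 2 * Real.log d) := by
  have hd0 : (0:ℝ) < d := lt_of_lt_of_le two_pos hd
  have hq0 : (0:ℝ) < q := by positivity
  have hδ'0 : 0 < δ / q := div_pos hδ0 hq0
  have hδ'1 : δ / q ≤ 1 := by
    rw [div_le_one hq0]
    have : (2:ℝ) ≤ q := by exact_mod_cast hq
    linarith
  have hlogd : 0 < Real.log d := Real.log_pos (by linarith)
  have hk1 : (1:ℝ) ≤ (k:ℝ) := by exact_mod_cast hk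
  -- 1/δ' ≤ d^(k-1)
  have hinv : 1 / (δ / q) ≤ d ^ ((k:ℤ) - 1) := by
    rw [div_le_iff₀ hδ'0]
    have h1 : d ^ ((k:ℤ) - 1) * d ^ (1 - (k:ℤ)) ≤ d ^ ((k:ℤ) - 1) * (δ / q) :=
      mul_le_mul_of_nonneg_left hδq (le_of_lt (zpow_pos hd0 _))
    calc (1:ℝ) = d ^ ((k:ℤ) - 1) * d ^ (1 - (k:ℤ)) := by
          rw [← zpow_add₀ (ne_of_gt hd0)]; norm_num
      _ ≤ _ := h1
  have hlog : ∀ i, Real.log ((1 + δ / q) / (x i + δ / q)) ≤ (k:ℝ) * Real.log d := by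
    intro i
    have hxi := hx0 i
    have h2 : (1 + δ / q) / (x i + δ / q) ≤ 2 / (δ / q) :=
      div_le_div₀ (by norm_num) (by linarith) hδ'0 (by linarith)
    have h4 : 2 / (δ / q) ≤ d ^ (k:ℤ) := by
      calc 2 / (δ / q) = 2 * (1 / (δ / q)) := by ring
        _ ≤ 2 * d ^ ((k:ℤ) - 1) := by
            exact mul_le_mul_of_nonneg_left hinv (by norm_num)
        _ ≤ d * d ^ ((k:ℤ) - 1) :=
            mul_le_mul_of_nonneg_right hd (zpow_pos hd0 _).le
        _ = d ^ (k:ℤ) := by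
            rw [← zpow_one_add₀ (ne_of_gt hd0)]; norm_num
    have h5 : Real.log ((1 + δ / q) / (x i + δ / q)) ≤ Real.log (d ^ (k:ℤ)) := by
      apply Real.log_le_log (by positivity) (le_trans h2 h4)
    rwa [Real.log_zpow, Int.cast_natCast] at h5
  have key : ∑ i, (4 * (k : ℝ) * y i * Real.log ((1 + δ / q) / (x i + δ / q))
          + (2 * (k : ℝ) - (h : ℝ) - 1) * x i)
      ≤ 4 * (k:ℝ)^2 * Real.log d + 2 * (k:ℝ) := by
    have h5 : ∑ i, (4 * (k : ℝ) * y i * Real.log ((1 + δ / q) / (x i + δ / q))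
            + (2 * (k : ℝ) - (h : ℝ) - 1) * x i)
        ≤ ∑ i, (4 * (k:ℝ)^2 * Real.log d * y i + 2 * (k:ℝ) * x i) := by
      apply Finset.sum_le_sum
      intro i _
      have hxi := hx0 i
      have hyi := hy0 i
      have hli := hlog i
      have hA : 4 * (k : ℝ) * y i * Real.log ((1 + δ / q) / (x i + δ / q))
          ≤ 4 * (k:ℝ)^2 * Real.log d * y i := by
        nlinarith [mul_le_mul_of_nonneg_left hli (by positivity : (0:ℝ) ≤ 4 * (k:ℝ) * y i)]
      have hh' : (h:ℝ) ≥ 0 := Nat.cast_nonneg h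
      nlinarith [mul_le_mul_of_nonneg_right (by linarith : 2 * (k:ℝ) - (h:ℝ) - 1 ≤ 2 * (k:ℝ)) hxi]
    have h6 : ∑ i, (4 * (k:ℝ)^2 * Real.log d * y i + 2 * (k:ℝ) * x i)
        = 4 * (k:ℝ)^2 * Real.log d * (∑ i, y i) + 2 * (k:ℝ) * (∑ i, x i) := by
      rw [Finset.sum_add_distrib, ← Finset.mul_sum, ← Finset.mul_sum]
    rw [h6] at h5
    have hsy : 0 ≤ ∑ i, y i := Finset.sum_nonneg fun i _ => hy0 i
    have hsx : 0 ≤ ∑ i, x i := Finset.sum_nonneg fun i _ => hx0 i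
    nlinarith [mul_le_mul_of_nonneg_left hy1 (by positivity : (0:ℝ) ≤ 4 * (k:ℝ)^2 * Real.log d),
      mul_le_mul_of_nonneg_left hx1 (by positivity : (0:ℝ) ≤ 2 * (k:ℝ))]
  have hpos : (0:ℝ) ≤ 4 * (k:ℝ)^2 * Real.log d + 2 * (k:ℝ) := by positivity
  have hfin : 2 * ∑ i, wt * (4 * (k : ℝ) * y i * Real.log ((1 + δ / q) / (x i + δ / q))
          + (2 * (k : ℝ) - (h : ℝ) - 1) * x i)
      ≤ 2 * (wt * (4 * (k:ℝ)^2 * Real.log d + 2 * (k:ℝ))) := by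
    rw [← Finset.mul_sum]
    have := mul_le_mul_of_nonneg_left key hwt0
    linarith
  have h2j : (2:ℝ) ^ (2 - (j:ℤ)) = 2 * (2:ℝ) ^ (1 - (j:ℤ)) := by
    rw [show (2:ℤ) - (j:ℤ) = 1 + (1 - (j:ℤ)) by ring, zpow_one_add₀ (by norm_num : (2:ℝ) ≠ 0)]
  have hwb : wt * (4 * (k:ℝ)^2 * Real.log d + 2 * (k:ℝ))
      ≤ ε * 2 ^ (1 - (j:ℤ)) * (4 * (k:ℝ)^2 * Real.log d + 2 * (k:ℝ)) :=
    mul_le_mul_of_nonneg_right hwt1 hpos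
  calc 2 * ∑ i, wt * (4 * (k : ℝ) * y i * Real.log ((1 + δ / q) / (x i + δ / q))
          + (2 * (k : ℝ) - (h : ℝ) - 1) * x i)
      ≤ 2 * (wt * (4 * (k:ℝ)^2 * Real.log d + 2 * (k:ℝ))) := hfin
    _ ≤ 2 * (ε * 2 ^ (1 - (j:ℤ)) * (4 * (k:ℝ)^2 * Real.log d + 2 * (k:ℝ))) := by linarith
    _ = ε * 2 ^ (2 - (j:ℤ)) * (2 * (k : ℝ) + 4 * (k : ℝ) ^ 2 * Real.log d) := by
        rw [h2j]; ring
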